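/- In the divided power envelope A_cris^0 (the A_inf-subalgebra of A_inf[1/p] generated by ξ^n/n! for n ≥ 1, where ξ generates ker(θ: A_inf → O_C)), one has μ^p ∈ p·A_cris^0, and consequently the p-adic topology of A_cris^0 agrees with the (p, μ)-adic topology. -/

import Mathlib

/-!
STATEMENT 0. In the divided power envelope `A_cris^0` (the `A_inf`-subalgebra of
`A_inf[1/p]` generated by `ξ^n/n!` for `n ≥ 1`, where `ξ` generates
`ker (θ : A_inf → O_C)`), one has `μ^p ∈ p·A_cris^0`, and consequently the `p`-adic
topology of `A_cris^0` agrees with the `(p, μ)`-adic topology.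

We formalize this abstractly: `A` plays the role of `A_inf`, `O` of `O_C`, and `B` of
`A_cris^0`, an `A`-algebra containing divided powers `dp n = ξ^n/n!` (characterized by
`n! * dp n = ξ^n`).  The agreement of topologies is expressed by the mutual
inclusions `(p)^p ⊇ (p, μ)^p` and `(p) ⊆ (p, μ)` of powers of the defining ideals.
-/

lemma aux_pow_sup_le {R : Type*} [CommRing R] (I J : Ideal R) (n : ℕ) :
    (I ⊔ J) ^ n ≤ I ⊔ J ^ n := by
  induction n with
  | zero => simp
  | succ n ih =>
    calc (I ⊔ J) ^ (n + 1) = (I ⊔ J) ^ n * (I ⊔ J) := by rw [pow_succ]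
      _ ≤ (I ⊔ J ^ n) * (I ⊔ J) := Ideal.mul_mono_left ih
      _ ≤ I ⊔ J ^ (n + 1) := by
          rw [Ideal.sup_mul, Ideal.mul_sup, Ideal.mul_sup, ← pow_succ]
          refine sup_le (sup_le ?_ ?_) (sup_le ?_ le_sup_right)
          · exact Ideal.mul_le_right.trans le_sup_left
          · exact Ideal.mul_le_left.trans le_sup_left
          · exact Ideal.mul_le_right.trans le_sup_left

theorem acris0_mu_pow_p_mem_and_topologies_agree
    {A O B : Type*} [CommRing A] [CommRing O] [CommRing B] [Algebra A B]
    (p : ℕ) [Fact p.Prime]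
    (θ : A →+* O) (ξ μ : A)
    (hker : RingHom.ker θ = Ideal.span {ξ})
    (hμ : θ μ = 0)
    (dp : ℕ → B)
    (hdp : ∀ n : ℕ, (n.factorial : B) * dp n = (algebraMap A B ξ) ^ n) :
    (algebraMap A B μ) ^ p ∈ Ideal.span {(p : B)} ∧
      (Ideal.span {(p : B), algebraMap A B μ}) ^ p ≤ Ideal.span {(p : B)} ∧
      Ideal.span {(p : B)} ≤ Ideal.span {(p : B), algebraMap A B μ} := by
  have hmem : μ ∈ Ideal.span {ξ} := by
    rw [← hker]; exact hμ
  obtain ⟨a, ha⟩ := Ideal.mem_span_singleton'.mp hmem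
  have hp : 1 ≤ p := (Fact.out : p.Prime).one_lt.le
  have hfact : (p.factorial : B) = (p : B) * ((p - 1).factorial : B) := by
    rw [← Nat.cast_mul, ← Nat.succ_pred_eq_of_pos (Fact.out : p.Prime).pos]
    simp [Nat.factorial_succ]
  have key : (algebraMap A B μ) ^ p ∈ Ideal.span {(p : B)} := by
    have : (algebraMap A B μ) ^ p
        = (p : B) * (((p - 1).factorial : B) * dp p * (algebraMap A B a) ^ p) := by
      rw [← ha, map_mul, mul_pow, ← hdp p, hfact]; ring
    rw [this]
    exact Ideal.mem_span_singleton'.mpr ⟨_, (mul_comm _ _)⟩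
  refine ⟨key, ?_, ?_⟩
  · have hpair : Ideal.span {(p : B), algebraMap A B μ}
        = Ideal.span {(p : B)} ⊔ Ideal.span {algebraMap A B μ} := by
      rw [Ideal.span_insert]
    rw [hpair]
    refine (aux_pow_sup_le _ _ p).trans (sup_le le_rfl ?_)
    rw [Ideal.span_singleton_pow]
    exact (Ideal.span_singleton_le_iff_mem _).mpr key
  · exact Ideal.span_mono (Set.singleton_subset_iff.mpr (by simp))
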